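/- Let H be a d-uniform properly-connected hypergraph and let E = {x_1,...,x_d} and E' be edges with dist_H(E, E') = t ≤ d. Then, after relabeling the vertices of E, there exists a proper irredundant chain E_0 = E, E_1, ..., E_t = E' such that E_i = {y_1,...,y_i, x_{i+1},...,x_d} for each i, and y_i ∉ E_j for all j < i. -/

import Mathlib

open Finset
open scoped Classical

noncomputable section

/-- A simple hypergraph: all edges have at least two vertices and no edge contains another. -/
structure SimpleHypergraph (V : Type*) where
  edges : Finset (Finset V)
  card_ge : ∀ e ∈ edges, 2 ≤ e.card
  antichain : ∀ e ∈ edges, ∀ f ∈ edges, e ⊆ f → e = f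

variable {V : Type*} [DecidableEq V]

/-- A chain `(E₀, x₁, E₁, …, xₙ, Eₙ)` in a hypergraph, recorded as the list of its edges;
the vertex conditions amount to `xₖ ∈ Eₖ₋₁ ∩ Eₖ`. -/
def IsHChain (H : SimpleHypergraph V) (l : List (Finset V)) : Prop :=
  l ≠ [] ∧ l.Nodup ∧ (∀ e ∈ l, e ∈ H.edges) ∧
  ∃ xs : List V, xs.Nodup ∧ xs.length + 1 = l.length ∧
    ∀ i, (h : i < xs.length) → xs.get ⟨i, h⟩ ∈ l.getD i ∅ ∩ l.getD (i+1) ∅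

/-- A proper chain: `|Eᵢ ∩ Eᵢ₊₁| = |Eᵢ₊₁| - 1` for all `i`. -/
def IsProperChain (H : SimpleHypergraph V) (l : List (Finset V)) : Prop :=
  IsHChain H l ∧ ∀ i, i + 1 < l.length →
    (l.getD i ∅ ∩ l.getD (i+1) ∅).card + 1 = (l.getD (i+1) ∅).card

/-- A proper irredundant chain: no proper subsequence with the same endpoints is a proper
chain. -/
def IsPIChain (H : SimpleHypergraph V) (l : List (Finset V)) : Prop :=
  IsProperChain H l ∧ ∀ l' : List (Finset V), l'.Sublist l → l' ≠ l →
    l'.head? = l.head? → l'.getLast? = l.getLast? → ¬ IsProperChain H l'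

/-- The distance between two edges: minimal length of a proper irredundant chain
from `E` to `F` (`∞` if there is none). -/
def edgeDist (H : SimpleHypergraph V) (E F : Finset V) : ℕ∞ :=
  sInf ((fun l : List (Finset V) => ((l.length - 1 : ℕ) : ℕ∞)) ''
    {l | IsPIChain H l ∧ l.head? = some E ∧ l.getLast? = some F})

/-- A `d`-uniform properly-connected hypergraph. -/
def UniformPC (H : SimpleHypergraph V) (d : ℕ) : Prop :=
  (∀ e ∈ H.edges, e.card = d) ∧
  ∀ E ∈ H.edges, ∀ F ∈ H.edges, (E ∩ F).Nonempty →
    edgeDist H E F = ((d - (E ∩ F).card : ℕ) : ℕ∞)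

/-- The sub-hypergraph consisting of the edges satisfying `P`. -/
def SimpleHypergraph.restrict (H : SimpleHypergraph V) (P : Finset V → Prop) :
    SimpleHypergraph V where
  edges := H.edges.filter P
  card_ge := fun e he => H.card_ge e (Finset.mem_filter.mp he).1
  antichain := fun e he f hf hef =>
    H.antichain e (Finset.mem_filter.mp he).1 f (Finset.mem_filter.mp hf).1 hef

/-- The vertex neighbor set `N(E)` of an edge: union of `F \ E` over edges at distance 1. -/
def nbrSet (H : SimpleHypergraph V) (E : Finset V) : Finset V :=
  (H.edges.filter fun F => edgeDist H E F = 1).sup fun F => F \ E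

variable (k : Type*) [Field k]

/-- The squarefree monomial attached to an edge. -/
def edgeMonomial (E : Finset V) : MvPolynomial V k := ∏ x ∈ E, MvPolynomial.X x

/-- The edge ideal of a hypergraph. -/
def edgeIdeal (H : SimpleHypergraph V) : Ideal (MvPolynomial V k) :=
  Ideal.span ((fun E => edgeMonomial k E) '' ↑H.edges)

/-- The exponent vector of the squarefree monomial attached to an edge. -/
def mexp (E : Finset V) : V →₀ ℕ := ∑ x ∈ E, Finsupp.single x 1

/-- The minimal monomials (w.r.t. divisibility) among a finite set of monomials;
these are the minimal generators of the monomial ideal they generate. -/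
def minMon (A : Finset (V →₀ ℕ)) : Finset (V →₀ ℕ) :=
  A.filter fun m => ∀ m' ∈ A, m' ≤ m → m' = m

/-- Minimal generators of `J ∩ K`, where `J`, `K` are the monomial ideals with
(minimal) monomial generators `A`, `B`: minimal elements among the pairwise lcm's. -/
def interMin (A B : Finset (V →₀ ℕ)) : Finset (V →₀ ℕ) :=
  minMon ((A ×ˢ B).image fun p => p.1 ⊔ p.2)

/-- Eliahou–Kervaire splitting: the monomial ideal generated by `A ∪ B` is split as
the sum of the ideals generated by `A` and by `B`. -/
def IsSplitting (A B : Finset (V →₀ ℕ)) : Prop :=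
  A.Nonempty ∧ B.Nonempty ∧ Disjoint A B ∧
  (∀ m ∈ A ∪ B, ∀ m' ∈ A ∪ B, m' ≤ m → m' = m) ∧
  ∃ φ ψ : (V →₀ ℕ) → (V →₀ ℕ),
    (∀ w ∈ interMin A B, φ w ∈ A ∧ ψ w ∈ B ∧ w = φ w ⊔ ψ w) ∧
    ∀ S ⊆ interMin A B, S.Nonempty → S.sup φ < S.sup id ∧ S.sup ψ < S.sup id

/-- A splitting edge of a hypergraph: `I(H) = (x^E) + I(H \ E)` is a splitting. -/
def IsSplittingEdge (H : SimpleHypergraph V) (E : Finset V) : Prop :=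
  E ∈ H.edges ∧ IsSplitting {mexp E} ((H.edges.erase E).image mexp)

variable [LinearOrder V]

/-- Total degree of a monomial. -/
def mdeg (m : V →₀ ℕ) : ℕ := m.sum fun _ e => e

/-- Basis of the degree-`j` part of the `i`-th term of the Taylor complex of the monomial
ideal generated by `G`: `i`-element subsets of `G` whose lcm has degree `j`. -/
def TaylorIndex (G : Finset (V →₀ ℕ)) (i j : ℕ) : Finset (Finset (V →₀ ℕ)) :=
  G.powerset.filter fun S => S.card = i ∧ mdeg (S.sup id) = j

/-- Matrix of the Taylor-complex differential `T_{i+1} → T_i` reduced mod the maximal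
ideal, in homological degree-`j` graded part. -/
def taylorMatrix (G : Finset (V →₀ ℕ)) (i j : ℕ) :
    Matrix (TaylorIndex G i j) (TaylorIndex G (i+1) j) k :=
  fun S' S =>
    if (S' : Finset (V →₀ ℕ)) ⊆ (S : Finset (V →₀ ℕ)) ∧
        (S' : Finset (V →₀ ℕ)).sup id = (S : Finset (V →₀ ℕ)).sup id then
      ∑ m ∈ (S : Finset (V →₀ ℕ)) \ (S' : Finset (V →₀ ℕ)),
        (-1 : k) ^ ((S' : Finset (V →₀ ℕ)).filter fun a => toLex a < toLex m).card
    else 0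

/-- The Taylor-complex differential reduced mod the maximal ideal. -/
def taylorBoundary (G : Finset (V →₀ ℕ)) (i j : ℕ) :
    ((TaylorIndex G (i+1) j) → k) →ₗ[k] ((TaylorIndex G i j) → k) :=
  Matrix.mulVecLin (taylorMatrix k G i j)

/-- The graded Betti number `β_{i,j}` of the monomial ideal generated by `G`, computed as
the dimension of the degree-`j` part of the `i`-th homology of the Taylor complex tensored
with the residue field. -/
def monomialBetti (G : Finset (V →₀ ℕ)) (i j : ℕ) : ℕ :=
  Module.finrank k (LinearMap.ker (taylorBoundary k G i j)) -
  Module.finrank k (LinearMap.range (taylorBoundary k G (i+1) j))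

/-- Castelnuovo–Mumford regularity of the monomial ideal generated by `G`. -/
def monReg (G : Finset (V →₀ ℕ)) : ℕ :=
  sSup {r | ∃ i j, monomialBetti k G i j ≠ 0 ∧ r + i = j}

/-- Projective dimension of the monomial ideal generated by `G`. -/
def monPdim (G : Finset (V →₀ ℕ)) : ℕ :=
  sSup {i | ∃ j, monomialBetti k G i j ≠ 0}

/-- Graded Betti numbers of the edge ideal of a hypergraph. -/
def edgeBetti (H : SimpleHypergraph V) (i j : ℕ) : ℕ :=
  monomialBetti k (H.edges.image mexp) i j

/-- Regularity of the edge ideal of a hypergraph. -/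
def edgeReg (H : SimpleHypergraph V) : ℕ :=
  monReg k (H.edges.image mexp)

lemma enat_sInf_mem {S : Set ℕ∞} {t : ℕ} (h : sInf S = (t : ℕ∞)) : (t : ℕ∞) ∈ S := by
  have hne : S.Nonempty := by
    by_contra hc
    rw [Set.not_nonempty_iff_eq_empty] at hc
    rw [hc, sInf_empty] at h
    exact (ENat.coe_ne_top t) h.symm
  obtain ⟨m, hm, hmin⟩ := (wellFounded_lt (α := ℕ∞)).has_min S hne
  have hsm : sInf S = m :=
    le_antisymm (sInf_le hm) (le_sInf fun x hx => not_lt.mp (hmin x hx))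
  rw [hsm] at h
  rwa [← h]

theorem proper_chain_structure {V : Type*} [DecidableEq V]
    (H : SimpleHypergraph V) (d t : ℕ) (hpc : UniformPC H d)
    (E E' : Finset V) (hE : E ∈ H.edges) (hE' : E' ∈ H.edges)
    (hdist : edgeDist H E E' = (t : ℕ∞)) (htd : t ≤ d) :
    ∃ (x : Fin d → V) (y : Fin t → V) (l : List (Finset V)),
      Function.Injective x ∧ Finset.univ.image x = E ∧
      IsPIChain H l ∧ l.length = t + 1 ∧ l.head? = some E ∧ l.getLast? = some E' ∧
      (∀ i : ℕ, i ≤ t → l.getD i ∅ =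
        ((Finset.univ.filter fun a : Fin t => (a : ℕ) < i).image y) ∪
        ((Finset.univ.filter fun a : Fin d => i ≤ (a : ℕ)).image x)) ∧
      ∀ i : Fin t, ∀ j : ℕ, j ≤ (i : ℕ) → y i ∉ l.getD j ∅ := by
  classical
  -- Extract a proper irredundant chain of length exactly `t`.
  obtain ⟨l, ⟨hPI, hhead, hlast⟩, hlen'⟩ :
      ∃ l, (IsPIChain H l ∧ l.head? = some E ∧ l.getLast? = some E') ∧
        ((l.length - 1 : ℕ) : ℕ∞) = (t : ℕ∞) := by
    have := enat_sInf_mem hdist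
    obtain ⟨l, hl, hl2⟩ := this
    exact ⟨l, hl, hl2⟩
  have hne : l ≠ [] := hPI.1.1.1
  have hlpos : 0 < l.length := List.length_pos_iff.mpr hne
  have hlen : l.length = t + 1 := by
    have := Nat.cast_inj.mp hlen'
    omega
  set f : ℕ → Finset V := fun i => l.getD i ∅ with hf
  have hmem : ∀ i, i ≤ t → f i ∈ H.edges := by
    intro i hi
    have hil : i < l.length := by omega
    have : f i = l[i] := List.getD_eq_getElem l ∅ hil
    rw [this]
    exact hPI.1.1.2.2.1 _ (List.getElem_mem hil)
  have hcard : ∀ i, i ≤ t → (f i).card = d := fun i hi => hpc.1 _ (hmem i hi)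
  have hd2 : 2 ≤ d := by
    have := H.card_ge E hE
    have := hpc.1 E hE
    omega
  have hf0 : f 0 = E := by
    cases l with
    | nil => exact absurd rfl hne
    | cons a l' =>
      simp only [List.head?] at hhead
      have : a = E := by injection hhead
      simp [hf, this]
  have hft : f t = E' := by
    have hil : t < l.length := by omega
    have h1 : f t = l[t] := List.getD_eq_getElem l ∅ hil
    have h2 : l.getLast hne = l[l.length - 1] := List.getLast_eq_getElem hne
    have h3 : l.getLast? = some (l.getLast hne) := List.getLast?_eq_getLast_of_ne_nil hne
    have hlast' : some (l.getLast hne) = some E' := h3 ▸ hlast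
    have h4 : l.getLast hne = E' := by injection hlast'
    have h6 : l[t]? = some E' := by
      have hidx : l.length - 1 = t := by omega
      rw [← hidx, List.getElem?_eq_getElem (by omega)]
      rw [h2] at h4
      exact congrArg some h4
    rw [List.getElem?_eq_getElem hil] at h6
    rw [h1]
    injection h6
  -- The proper-chain condition.
  have hproper : ∀ i, i < t → (f i ∩ f (i+1)).card + 1 = d := by
    intro i hi
    have h1 := hPI.1.2 i (by omega : i + 1 < l.length)
    have h2 := hcard (i+1) (by omega)
    rw [h2] at h1
    exact h1
  -- At each step, one vertex leaves and one vertex enters.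
  have hEne : E.Nonempty := by
    have : E.card = d := hpc.1 E hE
    exact Finset.card_pos.mp (by omega)
  obtain ⟨v0, hv0⟩ := hEne
  have hexyz : ∀ i : ℕ, ∃ yz : V × V, i < t →
      (f (i+1) \ f i = {yz.1} ∧ f i \ f (i+1) = {yz.2}) := by
    intro i
    by_cases hi : i < t
    · have hA : (f i).card = d := hcard i (by omega)
      have hB : (f (i+1)).card = d := hcard (i+1) (by omega)
      have hAB : (f i ∩ f (i+1)).card + 1 = d := hproper i hi
      have hBA : (f (i+1) ∩ f i).card + 1 = d := by rwa [Finset.inter_comm]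
      have h1 : (f (i+1) \ f i).card = 1 := by
        have := Finset.card_inter_add_card_sdiff (f (i+1)) (f i)
        omega
      have h2 : (f i \ f (i+1)).card = 1 := by
        have := Finset.card_inter_add_card_sdiff (f i) (f (i+1))
        omega
      obtain ⟨y, hy⟩ := Finset.card_eq_one.mp h1
      obtain ⟨z, hz⟩ := Finset.card_eq_one.mp h2
      exact ⟨(y, z), fun _ => ⟨hy, hz⟩⟩
    · exact ⟨(v0, v0), fun h => absurd h hi⟩
  choose YZ hYZ using hexyz
  set Y : ℕ → V := fun i => (YZ i).1 with hYdef
  set Z : ℕ → V := fun i => (YZ i).2 with hZdef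
  have hYs : ∀ i, i < t → f (i+1) \ f i = {Y i} := fun i hi => (hYZ i hi).1
  have hZs : ∀ i, i < t → f i \ f (i+1) = {Z i} := fun i hi => (hYZ i hi).2
  have hYin : ∀ i, i < t → Y i ∈ f (i+1) ∧ Y i ∉ f i := by
    intro i hi
    have : Y i ∈ f (i+1) \ f i := by rw [hYs i hi]; exact Finset.mem_singleton_self _
    exact ⟨(Finset.mem_sdiff.mp this).1, (Finset.mem_sdiff.mp this).2⟩
  have hZin : ∀ i, i < t → Z i ∈ f i ∧ Z i ∉ f (i+1) := by
    intro i hi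
    have : Z i ∈ f i \ f (i+1) := by rw [hZs i hi]; exact Finset.mem_singleton_self _
    exact ⟨(Finset.mem_sdiff.mp this).1, (Finset.mem_sdiff.mp this).2⟩
  have hBsub : ∀ i, i < t → f (i+1) ⊆ insert (Y i) (f i) := by
    intro i hi e he
    by_cases hef : e ∈ f i
    · exact Finset.mem_insert_of_mem hef
    · have : e ∈ f (i+1) \ f i := Finset.mem_sdiff.mpr ⟨he, hef⟩
      rw [hYs i hi] at this
      rw [Finset.mem_singleton] at this
      exact this ▸ Finset.mem_insert_self _ _
  have hAsub : ∀ i, i < t → f i ⊆ insert (Z i) (f (i+1)) := by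
    intro i hi e he
    by_cases hef : e ∈ f (i+1)
    · exact Finset.mem_insert_of_mem hef
    · have : e ∈ f i \ f (i+1) := Finset.mem_sdiff.mpr ⟨he, hef⟩
      rw [hZs i hi] at this
      rw [Finset.mem_singleton] at this
      exact this ▸ Finset.mem_insert_self _ _
  -- Forward bound: at most `i` vertices of `E` have left by step `i`.
  have hEout : ∀ i, i ≤ t → (E \ f i).card ≤ i := by
    intro i
    induction i with
    | zero => intro _; rw [hf0]; simp
    | succ i ih =>
      intro hi
      have hi' : i < t := by omega
      have hsub : E \ f (i+1) ⊆ insert (Z i) (E \ f i) := by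
        intro e he
        rw [Finset.mem_sdiff] at he
        by_cases hez : e = Z i
        · exact hez ▸ Finset.mem_insert_self _ _
        · apply Finset.mem_insert_of_mem
          rw [Finset.mem_sdiff]
          refine ⟨he.1, fun hef => he.2 ?_⟩
          have := hAsub i hi' hef
          rw [Finset.mem_insert] at this
          exact this.resolve_left hez
      calc (E \ f (i+1)).card ≤ (insert (Z i) (E \ f i)).card := Finset.card_le_card hsub
        _ ≤ (E \ f i).card + 1 := Finset.card_insert_le _ _
        _ ≤ i + 1 := by have := ih (by omega); omega
  have hcardE : E.card = d := hpc.1 E hE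
  -- The final intersection has exactly `d - t` elements.
  have hcardt : (E ∩ f t).card = d - t := by
    rcases (E ∩ f t).eq_empty_or_nonempty with hemp | hnemp
    · have h1 := Finset.card_inter_add_card_sdiff E (f t)
      have h2 := hEout t le_rfl
      rw [hemp, Finset.card_empty] at h1
      rw [hemp, Finset.card_empty]
      omega
    · rw [hft] at hnemp
      have := hpc.2 E hE E' hE' hnemp
      rw [hdist] at this
      have h1 : d - (E ∩ E').card = t := (Nat.cast_inj.mp this.symm)
      have h2 : (E ∩ E').card ≤ d := by
        have : E ∩ E' ⊆ E := Finset.inter_subset_left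
        have := Finset.card_le_card this
        omega
      rw [hft]
      omega
  -- Each intersection has exactly `d - i` elements.
  have hglow : ∀ i, i ≤ t → d - i ≤ (E ∩ f i).card := by
    intro i hi
    have h1 := Finset.card_inter_add_card_sdiff E (f i)
    have h2 := hEout i hi
    omega
  have hgup : ∀ k i, i + k = t → (E ∩ f i).card ≤ d - t + k := by
    intro k
    induction k with
    | zero =>
      intro i hi
      have h : i = t := by omega
      subst h
      have := hcardt
      omega
    | succ k ih =>
      intro i hi
      have hi' : i < t := by omega
      have hsub : E ∩ f i ⊆ insert (Z i) (E ∩ f (i+1)) := by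
        intro e he
        rw [Finset.mem_inter] at he
        by_cases hez : e = Z i
        · exact hez ▸ Finset.mem_insert_self _ _
        · apply Finset.mem_insert_of_mem
          rw [Finset.mem_inter]
          have := hAsub i hi' he.2
          rw [Finset.mem_insert] at this
          exact ⟨he.1, this.resolve_left hez⟩
      have h1 : (E ∩ f i).card ≤ (E ∩ f (i+1)).card + 1 :=
        le_trans (Finset.card_le_card hsub) (Finset.card_insert_le _ _)
      have h2 := ih (i+1) (by omega)
      omega
  have hgeq : ∀ i, i ≤ t → (E ∩ f i).card = d - i := by
    intro i hi
    have h1 := hglow i hi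
    have h2 := hgup (t - i) i (by omega)
    omega
  -- The outgoing vertex is always in `E`, the incoming one never is.
  have hZE : ∀ i, i < t → Z i ∈ E := by
    intro i hi
    by_contra hc
    have hsub : E ∩ f i ⊆ E ∩ f (i+1) := by
      intro e he
      rw [Finset.mem_inter] at he ⊢
      have := hAsub i hi he.2
      rw [Finset.mem_insert] at this
      refine ⟨he.1, this.resolve_left fun h => hc (h ▸ he.1)⟩
    have := Finset.card_le_card hsub
    rw [hgeq i (by omega), hgeq (i+1) (by omega)] at this
    omega
  have hYE : ∀ i, i < t → Y i ∉ E := by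
    intro i hi
    by_contra hc
    have hZmem : Z i ∈ E ∩ f i := Finset.mem_inter.mpr ⟨hZE i hi, (hZin i hi).1⟩
    have hsub : insert (Y i) ((E ∩ f i).erase (Z i)) ⊆ E ∩ f (i+1) := by
      intro e he
      rw [Finset.mem_insert] at he
      rcases he with he | he
      · exact he ▸ Finset.mem_inter.mpr ⟨hc, (hYin i hi).1⟩
      · rw [Finset.mem_erase, Finset.mem_inter] at he
        refine Finset.mem_inter.mpr ⟨he.2.1, ?_⟩
        have := hAsub i hi he.2.2
        rw [Finset.mem_insert] at this
        exact this.resolve_left he.1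
    have hnotin : Y i ∉ (E ∩ f i).erase (Z i) := by
      intro h
      have := Finset.mem_of_mem_erase h
      exact (hYin i hi).2 (Finset.mem_inter.mp this).2
    have h1 : (insert (Y i) ((E ∩ f i).erase (Z i))).card
        = ((E ∩ f i).erase (Z i)).card + 1 := Finset.card_insert_of_notMem hnotin
    have h2 : ((E ∩ f i).erase (Z i)).card = (E ∩ f i).card - 1 :=
      Finset.card_erase_of_mem hZmem
    have h3 := Finset.card_le_card hsub
    rw [h1, h2, hgeq i (by omega), hgeq (i+1) (by omega)] at h3
    omega
  -- Step descriptions of the two parts.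
  have hstepI : ∀ i, i < t → E ∩ f (i+1) = (E ∩ f i).erase (Z i) := by
    intro i hi
    have hsub : E ∩ f (i+1) ⊆ (E ∩ f i).erase (Z i) := by
      intro e he
      rw [Finset.mem_inter] at he
      have h1 : e ≠ Y i := fun h => hYE i hi (h ▸ he.1)
      have h2 : e ∈ f i := by
        have := hBsub i hi he.2
        rw [Finset.mem_insert] at this
        exact this.resolve_left h1
      have h3 : e ≠ Z i := fun h => (hZin i hi).2 (h ▸ he.2)
      exact Finset.mem_erase.mpr ⟨h3, Finset.mem_inter.mpr ⟨he.1, h2⟩⟩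
    have hZmem : Z i ∈ E ∩ f i := Finset.mem_inter.mpr ⟨hZE i hi, (hZin i hi).1⟩
    have hcle : ((E ∩ f i).erase (Z i)).card ≤ (E ∩ f (i+1)).card := by
      rw [Finset.card_erase_of_mem hZmem, hgeq i (by omega), hgeq (i+1) (by omega)]
      omega
    exact Finset.eq_of_subset_of_card_le hsub hcle
  have hstepD : ∀ i, i < t → f (i+1) \ E = insert (Y i) (f i \ E) := by
    intro i hi
    ext e
    rw [Finset.mem_insert, Finset.mem_sdiff, Finset.mem_sdiff]
    constructor
    · rintro ⟨h1, h2⟩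
      have := hBsub i hi h1
      rw [Finset.mem_insert] at this
      rcases this with h | h
      · exact Or.inl h
      · exact Or.inr ⟨h, h2⟩
    · rintro (h | ⟨h1, h2⟩)
      · exact ⟨h ▸ (hYin i hi).1, h ▸ hYE i hi⟩
      · refine ⟨?_, h2⟩
        have hz : e ≠ Z i := fun h => h2 (h ▸ hZE i hi)
        by_contra hc
        have : e ∈ f i \ f (i+1) := Finset.mem_sdiff.mpr ⟨h1, hc⟩
        rw [hZs i hi, Finset.mem_singleton] at this
        exact hz this
  -- Monotonicity of the two parts.
  have hmonoI : ∀ j, j ≤ t → ∀ i, i ≤ j → E ∩ f j ⊆ E ∩ f i := by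
    intro j
    induction j with
    | zero =>
      intro _ i hi
      have h : i = 0 := by omega
      subst h
      exact Finset.Subset.refl _
    | succ j ih =>
      intro hj i hi
      rcases Nat.eq_or_lt_of_le hi with h | h
      · rw [h]
      · have : E ∩ f (j+1) ⊆ E ∩ f j := by
          rw [hstepI j (by omega)]; exact Finset.erase_subset _ _
        exact this.trans (ih (by omega) i (by omega))
  have hmonoD : ∀ j, j ≤ t → ∀ i, i ≤ j → f i \ E ⊆ f j \ E := by
    intro j
    induction j with
    | zero =>
      intro _ i hi
      have h : i = 0 := by omega
      subst h
      exact Finset.Subset.refl _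
    | succ j ih =>
      intro hj i hi
      rcases Nat.eq_or_lt_of_le hi with h | h
      · rw [h]
      · have : f j \ E ⊆ f (j+1) \ E := by
          rw [hstepD j (by omega)]; exact Finset.subset_insert _ _
        exact (ih (by omega) i (by omega)).trans this
  have hZnot : ∀ i j, i < j → j ≤ t → Z i ∉ E ∩ f j := by
    intro i j hij hj hc
    have : Z i ∈ E ∩ f (i+1) := hmonoI j hj (i+1) (by omega) hc
    exact (hZin i (by omega)).2 (Finset.mem_inter.mp this).2
  -- Define the vertex labelings.
  set R : Finset V := E ∩ f t with hRdef
  have hRcard : R.card = d - t := hcardt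
  set e : R ≃ Fin (d - t) := Finset.equivFinOfCardEq hRcard with hedef
  set x : Fin d → V := fun a =>
    if h : (a : ℕ) < t then Z a else (e.symm ⟨(a : ℕ) - t, by omega⟩ : V) with hxdef
  set y : Fin t → V := fun a => Y a with hydef
  have hxlt : ∀ a : Fin d, (h : (a : ℕ) < t) → x a = Z a := by
    intro a h; simp only [hxdef, dif_pos h]
  have hxge : ∀ a : Fin d, (h : t ≤ (a : ℕ)) →
      x a = (e.symm ⟨(a : ℕ) - t, by omega⟩ : V) := by
    intro a h; simp only [hxdef, dif_neg (not_lt.mpr h)]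
  have hxgeR : ∀ a : Fin d, t ≤ (a : ℕ) → x a ∈ R := by
    intro a h
    rw [hxge a h]
    exact Finset.coe_mem _
  have hZE' : ∀ i, i < t → Z i ∈ E ∩ f i :=
    fun i hi => Finset.mem_inter.mpr ⟨hZE i hi, (hZin i hi).1⟩
  -- Injectivity of x.
  have hxinj : Function.Injective x := by
    intro a b hab
    by_cases ha : (a : ℕ) < t <;> by_cases hb : (b : ℕ) < t
    · rcases lt_trichotomy (a : ℕ) (b : ℕ) with h | h | h
      · exfalso
        rw [hxlt a ha, hxlt b hb] at hab
        exact hZnot a b h (by omega) (hab ▸ hZE' b hb)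
      · exact Fin.ext h
      · exfalso
        rw [hxlt a ha, hxlt b hb] at hab
        exact hZnot b a h (by omega) (hab ▸ hZE' a ha)
    · exfalso
      rw [hxlt a ha] at hab
      have : Z a ∈ R := hab ▸ hxgeR b (by omega)
      exact hZnot a t ha le_rfl this
    · exfalso
      rw [hxlt b hb] at hab
      have : Z b ∈ R := hab.symm ▸ hxgeR a (by omega)
      exact hZnot b t hb le_rfl this
    · rw [hxge a (by omega), hxge b (by omega)] at hab
      have h1 := e.symm.injective (Subtype.coe_injective hab)
      have h2 : (a : ℕ) - t = (b : ℕ) - t := congrArg Fin.val h1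
      exact Fin.ext (by omega)
  -- The tail part of x enumerates R.
  have hRimage : (Finset.univ.filter fun a : Fin d => t ≤ (a : ℕ)).image x = R := by
    apply Finset.Subset.antisymm
    · intro s hs
      rw [Finset.mem_image] at hs
      obtain ⟨a, ha, rfl⟩ := hs
      rw [Finset.mem_filter] at ha
      exact hxgeR a ha.2
    · intro s hs
      rw [Finset.mem_image]
      set j : Fin (d - t) := e ⟨s, hs⟩ with hjdef
      refine ⟨⟨t + (j : ℕ), by omega⟩, ?_, ?_⟩
      · rw [Finset.mem_filter]
        exact ⟨Finset.mem_univ _, by simp⟩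
      · have h1 : t ≤ ((⟨t + (j : ℕ), by omega⟩ : Fin d) : ℕ) := by simp
        rw [hxge _ h1]
        have h2 : (⟨((⟨t + (j : ℕ), by omega⟩ : Fin d) : ℕ) - t, by omega⟩ : Fin (d - t)) = j := by
          apply Fin.ext; simp
        rw [h2, hjdef, Equiv.symm_apply_apply]
  -- The intersection part equals the tail image, by downward induction.
  have hIimg : ∀ k i, i + k = t →
      (Finset.univ.filter fun a : Fin d => i ≤ (a : ℕ)).image x = E ∩ f i := by
    intro k
    induction k with
    | zero =>
      intro i hi
      have : i = t := by omega
      rw [this]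
      exact hRimage
    | succ k ih =>
      intro i hi
      have hit : i < t := by omega
      have hid : i < d := by omega
      have hfilter : (Finset.univ.filter fun a : Fin d => i ≤ (a : ℕ)) =
          insert ⟨i, hid⟩ (Finset.univ.filter fun a : Fin d => i + 1 ≤ (a : ℕ)) := by
        ext a
        simp only [Finset.mem_filter, Finset.mem_insert, Finset.mem_univ, true_and]
        constructor
        · intro h
          rcases Nat.eq_or_lt_of_le h with h' | h'
          · exact Or.inl (Fin.ext h'.symm)
          · exact Or.inr h'
        · rintro (h | h)
          · rw [h]
          · omega
      rw [hfilter, Finset.image_insert, ih (i+1) (by omega), hstepI i hit,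
        hxlt ⟨i, hid⟩ hit]
      exact Finset.insert_erase (hZE' i hit)
  -- The new-vertex part equals the head image, by upward induction.
  have hDimg : ∀ i, i ≤ t →
      (Finset.univ.filter fun a : Fin t => (a : ℕ) < i).image y = f i \ E := by
    intro i
    induction i with
    | zero =>
      intro _
      rw [hf0]
      simp
    | succ i ih =>
      intro hi
      have hit : i < t := by omega
      have hfilter : (Finset.univ.filter fun a : Fin t => (a : ℕ) < i + 1) =
          insert ⟨i, hit⟩ (Finset.univ.filter fun a : Fin t => (a : ℕ) < i) := by
        ext a
        simp only [Finset.mem_filter, Finset.mem_insert, Finset.mem_univ, true_and]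
        constructor
        · intro h
          rcases Nat.lt_succ_iff_lt_or_eq.mp h with h' | h'
          · exact Or.inr h'
          · exact Or.inl (Fin.ext h')
        · rintro (h | h)
          · rw [h]; simp
          · omega
      rw [hfilter, Finset.image_insert, ih (by omega), hstepD i hit]
  -- Assemble everything.
  refine ⟨x, y, l, hxinj, ?_, hPI, hlen, hhead, hlast, ?_, ?_⟩
  · -- image of x is E
    have h0 : (Finset.univ.filter fun a : Fin d => 0 ≤ (a : ℕ)) = Finset.univ := by
      ext a; simp
    have := hIimg t 0 (by omega)
    rw [h0, hf0] at this
    rw [this]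
    simp
  · -- structure of each edge
    intro i hi
    have h1 := hDimg i hi
    have h2 := hIimg (t - i) i (by omega)
    rw [h1, h2]
    rw [Finset.inter_comm, Finset.sdiff_union_inter]
  · -- new vertices do not appear earlier
    intro i j hj hc
    have hit : (i : ℕ) < t := i.isLt
    have hyY : y i = Y i := rfl
    have hjt : j ≤ t := by omega
    rcases Finset.mem_union.mp
        ((Finset.sdiff_union_inter (f j) E).symm ▸ hc : y i ∈ f j \ E ∪ f j ∩ E) with h | h
    · have : y i ∈ f i \ E := hmonoD i (by omega) j hj h
      exact (hYin i hit).2 (Finset.mem_sdiff.mp this).1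
    · exact hYE i hit (Finset.mem_inter.mp h).2
end
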